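/- arXiv:2006.07008 — 3 statements merged into one kernel-verified Lean document; each statement's English description precedes it below -/
import Mathlib

section
/- Let A be a non-negative operator on a complex Banach space X and x ∈ X. Then the limit lim_{t→0⁺} A(t+A)^{-1}x exists in X if and only if x can be written as x = x₀ + x₁ with x₀ ∈ Ker(A) and x₁ ∈ closure of R(A). In that case lim_{t→0⁺} t(t+A)^{-1}x = x₀ and lim_{t→0⁺} A(t+A)^{-1}x = x₁. -/
open Filter Topology

theorem stmt_9
    {X : Type*} [NormedAddCommGroup X] [NormedSpace ℂ X] [CompleteSpace X]
    (dom : Submodule ℂ X) (A : dom →ₗ[ℂ] X)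
    (R : ℝ → X →L[ℂ] X)
    (hRmem : ∀ (t : ℝ), 0 < t → ∀ x : X, R t x ∈ dom)
    (hRright : ∀ (t : ℝ) (ht : 0 < t) (x : X),
      (t : ℂ) • R t x + A ⟨R t x, hRmem t ht x⟩ = x)
    (hRleft : ∀ (t : ℝ), 0 < t → ∀ x : dom, R t ((t : ℂ) • (x : X) + A x) = (x : X))
    (M : ℝ)
    (hM : ∀ (t : ℝ), 0 < t → ∀ x : X, ‖(t : ℂ) • R t x‖ ≤ M * ‖x‖)
    (AR : ℝ → X →L[ℂ] X)
    (hAR : ∀ (t : ℝ) (ht : 0 < t) (x : X), AR t x = A ⟨R t x, hRmem t ht x⟩) :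
    ∀ x : X,
      ((∃ y : X, Tendsto (fun t : ℝ => AR t x) (𝓝[>] (0 : ℝ)) (𝓝 y)) ↔
        ∃ x₀ x₁ : X, x = x₀ + x₁ ∧ (∃ h : x₀ ∈ dom, A ⟨x₀, h⟩ = 0) ∧
          x₁ ∈ closure (Set.range fun y : dom => A y)) ∧
      (∀ x₀ x₁ : X, x = x₀ + x₁ → (∃ h : x₀ ∈ dom, A ⟨x₀, h⟩ = 0) →
        x₁ ∈ closure (Set.range fun y : dom => A y) →
        Tendsto (fun t : ℝ => (t : ℂ) • R t x) (𝓝[>] (0 : ℝ)) (𝓝 x₀) ∧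
        Tendsto (fun t : ℝ => AR t x) (𝓝[>] (0 : ℝ)) (𝓝 x₁)) := by
  -- Norm bound with |M|
  have habs : ∀ (t : ℝ), 0 < t → ∀ z : X, ‖(t : ℂ) • R t z‖ ≤ |M| * ‖z‖ := by
    intro t ht z
    exact (hM t ht z).trans (mul_le_mul_of_nonneg_right (le_abs_self M) (norm_nonneg z))
  -- AR t z = z - t • R t z
  have hARsub : ∀ (t : ℝ), 0 < t → ∀ z : X, AR t z = z - (t : ℂ) • R t z := by
    intro t ht z
    rw [hAR t ht z]
    exact eq_sub_of_add_eq' (hRright t ht z)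
  -- kernel elements are fixed by t • R t
  have hker : ∀ (x₀ : X) (h : x₀ ∈ dom), A ⟨x₀, h⟩ = 0 → ∀ t : ℝ, 0 < t →
      (t : ℂ) • R t x₀ = x₀ := by
    intro x₀ h hA0 t ht
    have h1 := hRleft t ht ⟨x₀, h⟩
    rw [hA0, add_zero] at h1
    rw [← map_smul]
    exact h1
  -- t • R t x₁ → 0 for x₁ in the closure of the range
  have hrange0 : ∀ x₁ : X, x₁ ∈ closure (Set.range fun y : dom => A y) →
      Tendsto (fun t : ℝ => (t : ℂ) • R t x₁) (𝓝[>] (0 : ℝ)) (𝓝 0) := by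
    intro x₁ hx₁
    rw [Metric.tendsto_nhdsWithin_nhds]
    intro ε hε
    obtain ⟨z, hz, hdz⟩ := Metric.mem_closure_iff.mp hx₁ (ε / (2 * (|M| + 1)))
      (by positivity)
    obtain ⟨y, rfl⟩ := hz
    refine ⟨ε / (2 * ((1 + |M|) * ‖(y : X)‖ + 1)), by positivity, ?_⟩
    intro t ht hd
    rw [Set.mem_Ioi] at ht
    rw [Real.dist_eq, sub_zero, abs_of_pos ht] at hd
    rw [dist_zero_right]
    have hRAy : R t (A y) = (y : X) - (t : ℂ) • R t (y : X) := by
      have h1 := hRleft t ht y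
      rw [map_add, map_smul] at h1
      exact eq_sub_of_add_eq' h1
    have key : (t : ℂ) • R t x₁ = (t : ℂ) • R t (x₁ - A y) +
        ((t : ℂ) • (y : X) - (t : ℂ) • ((t : ℂ) • R t (y : X))) := by
      rw [map_sub, smul_sub, hRAy, smul_sub]
      abel
    have hn1 : ‖(t : ℂ) • R t (x₁ - A y)‖ ≤ |M| * ‖x₁ - A y‖ := habs t ht _
    have hn2 : ‖(t : ℂ) • (y : X)‖ = t * ‖(y : X)‖ := by
      rw [norm_smul, Complex.norm_real, Real.norm_eq_abs, abs_of_pos ht]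
    have hn3 : ‖(t : ℂ) • ((t : ℂ) • R t (y : X))‖ ≤ t * (|M| * ‖(y : X)‖) := by
      rw [norm_smul, Complex.norm_real, Real.norm_eq_abs, abs_of_pos ht]
      exact mul_le_mul_of_nonneg_left (habs t ht _) ht.le
    have hd1 : ‖x₁ - A y‖ < ε / (2 * (|M| + 1)) := by
      rw [← dist_eq_norm]; exact hdz
    calc ‖(t : ℂ) • R t x₁‖
        ≤ ‖(t : ℂ) • R t (x₁ - A y)‖ +
          (‖(t : ℂ) • (y : X)‖ + ‖(t : ℂ) • ((t : ℂ) • R t (y : X))‖) := by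
          rw [key]
          exact (norm_add_le _ _).trans (by gcongr; exact norm_sub_le _ _)
      _ < ε := by
          rw [hn2]
          have hM0 : (0:ℝ) ≤ |M| := abs_nonneg M
          have hy0 : (0:ℝ) ≤ ‖(y : X)‖ := norm_nonneg _
          have hx0 : (0:ℝ) ≤ ‖x₁ - A y‖ := norm_nonneg _
          have h2 : (0:ℝ) < |M| + 1 := by positivity
          have e1 : |M| * ‖x₁ - A y‖ < ε / 2 := by
            have h3 := mul_lt_mul_of_pos_left hd1 h2
            have h4 : (|M| + 1) * (ε / (2 * (|M| + 1))) = ε / 2 := by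
              field_simp
            nlinarith
          have e2 : t * ‖(y : X)‖ + t * (|M| * ‖(y : X)‖) < ε / 2 := by
            have h5 : (0:ℝ) < (1 + |M|) * ‖(y : X)‖ + 1 := by positivity
            have h6 := mul_lt_mul_of_pos_left hd h5
            have h7 : ((1 + |M|) * ‖(y : X)‖ + 1) * (ε / (2 * ((1 + |M|) * ‖(y : X)‖ + 1)))
                = ε / 2 := by field_simp
            nlinarith
          linarith [hn1, hn3]
  -- both limits for a given decomposition
  have part2 : ∀ x₀ x₁ : X, (∃ h : x₀ ∈ dom, A ⟨x₀, h⟩ = 0) →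
      x₁ ∈ closure (Set.range fun y : dom => A y) →
      Tendsto (fun t : ℝ => (t : ℂ) • R t (x₀ + x₁)) (𝓝[>] (0 : ℝ)) (𝓝 x₀) ∧
      Tendsto (fun t : ℝ => AR t (x₀ + x₁)) (𝓝[>] (0 : ℝ)) (𝓝 x₁) := by
    rintro x₀ x₁ ⟨h0, hA0⟩ h1
    have heq : ∀ᶠ t : ℝ in 𝓝[>] (0 : ℝ),
        x₀ + (t : ℂ) • R t x₁ = (t : ℂ) • R t (x₀ + x₁) := by
      filter_upwards [self_mem_nhdsWithin] with t ht
      rw [map_add, smul_add, hker x₀ h0 hA0 t ht]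
    have hT1 : Tendsto (fun t : ℝ => (t : ℂ) • R t (x₀ + x₁)) (𝓝[>] (0 : ℝ)) (𝓝 x₀) := by
      have h := (tendsto_const_nhds (x := x₀) (f := 𝓝[>] (0:ℝ))).add (hrange0 x₁ h1)
      rw [add_zero] at h
      exact Tendsto.congr' heq h
    refine ⟨hT1, ?_⟩
    have heq2 : ∀ᶠ t : ℝ in 𝓝[>] (0 : ℝ),
        (x₀ + x₁) - (t : ℂ) • R t (x₀ + x₁) = AR t (x₀ + x₁) := by
      filter_upwards [self_mem_nhdsWithin] with t ht
      rw [hARsub t ht]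
    have h := (tendsto_const_nhds (x := x₀ + x₁) (f := 𝓝[>] (0:ℝ))).sub hT1
    have hx : x₀ + x₁ - x₀ = x₁ := by abel
    rw [hx] at h
    exact Tendsto.congr' heq2 h
  intro x
  constructor
  · constructor
    · rintro ⟨y, hy⟩
      -- t • R t x → x - y
      have hx0 : Tendsto (fun t : ℝ => (t : ℂ) • R t x) (𝓝[>] (0 : ℝ)) (𝓝 (x - y)) := by
        have heq : ∀ᶠ t : ℝ in 𝓝[>] (0 : ℝ), x - AR t x = (t : ℂ) • R t x := by
          filter_upwards [self_mem_nhdsWithin] with t ht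
          rw [hARsub t ht]; abel
        exact Tendsto.congr' heq ((tendsto_const_nhds (x := x) (f := 𝓝[>] (0:ℝ))).sub hy)
      set z : ℝ → X := fun t => (t : ℂ) • R t x with hz
      have hzmem : ∀ t : ℝ, 0 < t → z t ∈ dom := fun t ht =>
        dom.smul_mem _ (hRmem t ht x)
      have hAz : ∀ (t : ℝ) (ht : 0 < t), A ⟨z t, hzmem t ht⟩ = (t : ℂ) • AR t x := by
        intro t ht
        have he : (⟨z t, hzmem t ht⟩ : dom) = (t : ℂ) • (⟨R t x, hRmem t ht x⟩ : dom) := rfl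
        rw [he, map_smul, hAR t ht]
      -- (t:ℂ) • AR t x → 0
      have hAz0 : Tendsto (fun t : ℝ => (t : ℂ) • AR t x) (𝓝[>] (0 : ℝ)) (𝓝 0) := by
        have hc : Tendsto (fun t : ℝ => (t : ℂ)) (𝓝[>] (0 : ℝ)) (𝓝 (0 : ℂ)) := by
          have := Complex.continuous_ofReal.continuousWithinAt
            (s := Set.Ioi (0:ℝ)) (x := (0:ℝ))
          simpa [ContinuousWithinAt] using this
        have := hc.smul hy
        rw [zero_smul] at this
        exact this
      have hW : ∀ t : ℝ, 0 < t → R 1 (z t + (t : ℂ) • AR t x) = z t := by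
        intro t ht
        have h1 := hRleft 1 one_pos ⟨z t, hzmem t ht⟩
        rw [hAz t ht] at h1
        simpa using h1
      have hlim1 : Tendsto (fun t : ℝ => R 1 (z t + (t : ℂ) • AR t x)) (𝓝[>] (0 : ℝ))
          (𝓝 (R 1 (x - y))) := by
        have harg : Tendsto (fun t : ℝ => z t + (t : ℂ) • AR t x) (𝓝[>] (0 : ℝ))
            (𝓝 (x - y)) := by
          have := hx0.add hAz0
          rw [add_zero] at this
          exact this
        exact ((R 1).continuous.tendsto _).comp harg
      have hlim2 : Tendsto (fun t : ℝ => R 1 (z t + (t : ℂ) • AR t x)) (𝓝[>] (0 : ℝ))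
          (𝓝 (x - y)) := by
        have heq : ∀ᶠ t : ℝ in 𝓝[>] (0 : ℝ), z t = R 1 (z t + (t : ℂ) • AR t x) := by
          filter_upwards [self_mem_nhdsWithin] with t ht
          exact (hW t ht).symm
        exact Tendsto.congr' heq hx0
      have hfix : R 1 (x - y) = x - y := tendsto_nhds_unique hlim1 hlim2
      have h0 : x - y ∈ dom := by rw [← hfix]; exact hRmem 1 one_pos (x - y)
      have hA0 : A ⟨x - y, h0⟩ = 0 := by
        have h1 := hRright 1 one_pos (x - y)
        have he : (⟨R 1 (x - y), hRmem 1 one_pos (x - y)⟩ : dom) = ⟨x - y, h0⟩ :=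
          Subtype.ext hfix
        rw [he, hfix, Complex.ofReal_one, one_smul] at h1
        exact add_eq_left.mp h1
      have hyc : y ∈ closure (Set.range fun y : dom => A y) := by
        refine mem_closure_of_tendsto hy ?_
        filter_upwards [self_mem_nhdsWithin] with t ht
        exact ⟨⟨R t x, hRmem t ht x⟩, (hAR t ht x).symm⟩
      exact ⟨x - y, y, by abel, ⟨h0, hA0⟩, hyc⟩
    · rintro ⟨x₀, x₁, hx, hk, hc⟩
      subst hx
      exact ⟨x₁, (part2 x₀ x₁ hk hc).2⟩
  · intro x₀ x₁ hx hk hc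
    subst hx
    exact part2 x₀ x₁ hk hc
end

section
/- Let A be a non-negative operator on a complex Banach space X and let x belong to (closure of D(A)) ∩ (closure of R(A)). Then the improper Bochner integral ∫₀^∞ A(t+A)^{-2}x dt converges (as a limit of ∫_ε^N as ε → 0⁺ and N → ∞) and equals x. -/
open MeasureTheory Filter Topology intervalIntegral

set_option maxHeartbeats 1000000 in
theorem stmt_13
    {X : Type*} [NormedAddCommGroup X] [NormedSpace ℂ X] [CompleteSpace X]
    (dom : Submodule ℂ X) (A : dom →ₗ[ℂ] X)
    (R : ℝ → X →L[ℂ] X)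
    (hRmem : ∀ (t : ℝ), 0 < t → ∀ x : X, R t x ∈ dom)
    (hRright : ∀ (t : ℝ) (ht : 0 < t) (x : X),
      (t : ℂ) • R t x + A ⟨R t x, hRmem t ht x⟩ = x)
    (hRleft : ∀ (t : ℝ), 0 < t → ∀ x : dom, R t ((t : ℂ) • (x : X) + A x) = (x : X))
    (M : ℝ)
    (hM : ∀ (t : ℝ), 0 < t → ∀ x : X, ‖(t : ℂ) • R t x‖ ≤ M * ‖x‖)
    (AR : ℝ → X →L[ℂ] X)
    (hAR : ∀ (t : ℝ) (ht : 0 < t) (x : X), AR t x = A ⟨R t x, hRmem t ht x⟩) :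
    ∀ x : X, x ∈ closure (dom : Set X) →
      x ∈ closure (Set.range fun y : dom => A y) →
      Tendsto (fun p : ℝ × ℝ => ∫ t in p.1..p.2, AR t (R t x))
        ((𝓝[>] (0 : ℝ)) ×ˢ atTop) (𝓝 x) := by
  intro x hx1 hx2
  set M' : ℝ := max M 0 with hM'def
  have hM'0 : (0:ℝ) ≤ M' := le_max_right _ _
  have hcs : ∀ (t : ℝ) (v : X), (t : ℂ) • v = t • v := by
    intro t v
    rw [show ((t : ℂ)) = algebraMap ℝ ℂ t from rfl, algebraMap_smul]
  -- multiplicative norm bound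
  have hbm : ∀ t : ℝ, 0 < t → ∀ z : X, t * ‖R t z‖ ≤ M' * ‖z‖ := by
    intro t ht z
    have h1 := hM t ht z
    rw [norm_smul, Complex.norm_real, Real.norm_eq_abs, abs_of_pos ht] at h1
    nlinarith [norm_nonneg z, le_max_left M 0]
  -- pointwise norm bound
  have hbp : ∀ t : ℝ, 0 < t → ∀ z : X, ‖R t z‖ ≤ M' / t * ‖z‖ := by
    intro t ht z
    rw [div_mul_eq_mul_div, le_div_iff₀ ht, mul_comm ‖R t z‖ t]
    exact hbm t ht z
  -- real-smul bound
  have hbr : ∀ t : ℝ, 0 < t → ∀ z : X, ‖t • R t z‖ ≤ M' * ‖z‖ := by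
    intro t ht z
    rw [norm_smul, Real.norm_eq_abs, abs_of_pos ht]
    exact hbm t ht z
  -- resolvent identity
  have hres : ∀ s t : ℝ, 0 < s → 0 < t → ∀ z : X,
      R s z - R t z = (t - s) • R t (R s z) := by
    intro s t hs ht z
    have h2 := hRright s hs z
    have h3 : A ⟨R s z, hRmem s hs z⟩ = z - (s:ℂ) • R s z := by
      rw [eq_sub_iff_add_eq, add_comm]; exact h2
    have h1 := hRleft t ht ⟨R s z, hRmem s hs z⟩
    rw [h3] at h1
    simp only [map_add, map_sub, _root_.map_smul] at h1
    -- h1 : (t:ℂ) • R t (R s z) + (R t z - (s:ℂ) • R t (R s z)) = R s z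
    have hc : ((t - s : ℝ) : ℂ) • R t (R s z)
        = (t:ℂ) • R t (R s z) - (s:ℂ) • R t (R s z) := by
      push_cast
      rw [sub_smul]
    rw [← hcs, hc]
    conv_lhs => rw [← h1]
    abel
  -- continuity of s ↦ R s z at every t > 0
  have hcontR : ∀ (z : X) (t : ℝ), 0 < t →
      Tendsto (fun s => R s z) (𝓝 t) (𝓝 (R t z)) := by
    intro z t ht
    rw [tendsto_iff_norm_sub_tendsto_zero]
    have ht2 : t / 2 < t := half_lt_self ht
    have ht2' : t < 2 * t := by linarith
    apply squeeze_zero' (g := fun s => |t - s| * (M' / t * (2 * M' / t * ‖z‖)))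
    · exact Eventually.of_forall fun s => norm_nonneg _
    · filter_upwards [Ioo_mem_nhds ht2 ht2'] with s hs
      have hs0 : 0 < s := lt_trans (half_pos ht) hs.1
      rw [hres s t hs0 ht z, norm_smul, Real.norm_eq_abs]
      have hdd : M' / s ≤ 2 * M' / t := by
        rw [div_le_div_iff₀ hs0 ht]
        nlinarith [hs.1, hM'0]
      have hpos : (0:ℝ) ≤ M' / t := by positivity
      have b1 : ‖R t (R s z)‖ ≤ M' / t * (M' / s * ‖z‖) :=
        (hbp t ht _).trans (mul_le_mul_of_nonneg_left (hbp s hs0 z) hpos)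
      have b2 : M' / s * ‖z‖ ≤ 2 * M' / t * ‖z‖ :=
        mul_le_mul_of_nonneg_right hdd (norm_nonneg z)
      calc |t - s| * ‖R t (R s z)‖
          ≤ |t - s| * (M' / t * (M' / s * ‖z‖)) :=
            mul_le_mul_of_nonneg_left b1 (abs_nonneg _)
        _ ≤ |t - s| * (M' / t * (2 * M' / t * ‖z‖)) :=
            mul_le_mul_of_nonneg_left
              (mul_le_mul_of_nonneg_left b2 hpos) (abs_nonneg _)
    · have : Tendsto (fun s : ℝ => |t - s| * (M' / t * (2 * M' / t * ‖z‖))) (𝓝 t)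
          (𝓝 (|t - t| * (M' / t * (2 * M' / t * ‖z‖)))) :=
        ((tendsto_const_nhds.sub tendsto_id).abs).mul_const _
      simpa using this
  -- continuity of s ↦ R s (R s x)
  have hconth : ∀ t : ℝ, 0 < t →
      Tendsto (fun s => R s (R s x)) (𝓝 t) (𝓝 (R t (R t x))) := by
    intro t ht
    have h2 := hcontR (R t x) t ht
    have h1 : Tendsto (fun s => R s (R s x) - R s (R t x)) (𝓝 t) (𝓝 0) := by
      rw [tendsto_zero_iff_norm_tendsto_zero]
      have ht2 : t / 2 < t := half_lt_self ht
      have ht2' : t < 2 * t := by linarith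
      apply squeeze_zero' (g := fun s => 2 * M' / t * ‖R s x - R t x‖)
      · exact Eventually.of_forall fun s => norm_nonneg _
      · filter_upwards [Ioo_mem_nhds ht2 ht2'] with s hs
        have hs0 : 0 < s := lt_trans (half_pos ht) hs.1
        have hdd : M' / s ≤ 2 * M' / t := by
          rw [div_le_div_iff₀ hs0 ht]
          nlinarith [hs.1, hM'0]
        calc ‖R s (R s x) - R s (R t x)‖ = ‖R s (R s x - R t x)‖ := by rw [map_sub]
          _ ≤ M' / s * ‖R s x - R t x‖ := hbp s hs0 _
          _ ≤ 2 * M' / t * ‖R s x - R t x‖ :=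
              mul_le_mul_of_nonneg_right hdd (norm_nonneg _)
      · have := (tendsto_iff_norm_sub_tendsto_zero.mp (hcontR x t ht)).const_mul (2 * M' / t)
        simpa using this
    have := h1.add h2
    rw [zero_add] at this
    refine this.congr fun s => by abel
  -- derivative of s ↦ R s x
  have hderiv : ∀ t : ℝ, 0 < t →
      HasDerivAt (fun s => R s x) (-(R t (R t x))) t := by
    intro t ht
    rw [hasDerivAt_iff_tendsto_slope]
    have hlim : Tendsto (fun s => -(R t (R s x))) (𝓝[≠] t) (𝓝 (-(R t (R t x)))) := by
      have : Tendsto (fun s => R t (R s x)) (𝓝 t) (𝓝 (R t (R t x))) :=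
        ((R t).continuous.tendsto _).comp (hcontR x t ht)
      exact (this.neg).mono_left nhdsWithin_le_nhds
    apply hlim.congr'
    have ht2 : t / 2 < t := half_lt_self ht
    have ht2' : t < 2 * t := by linarith
    filter_upwards [self_mem_nhdsWithin,
      mem_nhdsWithin_of_mem_nhds (Ioo_mem_nhds ht2 ht2')] with s hne hs
    have hs0 : 0 < s := lt_trans (half_pos ht) hs.1
    have hne' : s ≠ t := hne
    rw [slope_def_module, hres s t hs0 ht x, smul_smul,
      show (s - t)⁻¹ * (t - s) = -1 by
        field_simp [sub_ne_zero.mpr hne']; ring,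
      neg_one_smul]
  -- the integrand in convenient form
  have hAReq : ∀ t : ℝ, 0 < t → AR t (R t x) = R t x - t • R t (R t x) := by
    intro t ht
    rw [hAR t ht (R t x), ← hcs, eq_sub_iff_add_eq, add_comm]
    exact hRright t ht (R t x)
  -- derivative of s ↦ s • R s x
  have hderivg : ∀ t : ℝ, 0 < t →
      HasDerivAt (fun s : ℝ => s • R s x) (AR t (R t x)) t := by
    intro t ht
    have h := (hasDerivAt_id t).smul (hderiv t ht)
    rw [hAReq t ht]
    convert h using 1
    · rfl
    simp only [id_eq, one_smul, smul_neg]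
    abel
  -- continuity of the integrand
  have hG : ∀ t : ℝ, 0 < t → ContinuousAt (fun s => AR s (R s x)) t := by
    intro t ht
    have heq : (fun s : ℝ => R s x - s • R s (R s x)) =ᶠ[𝓝 t]
        fun s => AR s (R s x) := by
      filter_upwards [Ioi_mem_nhds ht] with s hs
      exact (hAReq s hs).symm
    exact ContinuousAt.congr
      ((hcontR x t ht).sub (continuousAt_id.smul (hconth t ht))) heq
  -- the fundamental identity for the integral
  have key : ∀ a b : ℝ, 0 < a → 0 < b →
      (∫ t in a..b, AR t (R t x)) = b • R b x - a • R a x := by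
    intro a b ha hb
    have hsub : Set.uIcc a b ⊆ Set.Ioi 0 := fun u hu =>
      lt_of_lt_of_le (lt_min ha hb) hu.1
    apply intervalIntegral.integral_eq_sub_of_hasDerivAt
    · intro t htmem
      exact hderivg t (hsub htmem)
    · apply ContinuousOn.intervalIntegrable
      intro t htmem
      exact (hG t (hsub htmem)).continuousWithinAt
  -- limit at infinity
  have T1 : Tendsto (fun N : ℝ => N • R N x) atTop (𝓝 x) := by
    rw [Metric.tendsto_atTop]
    intro δ hδ
    obtain ⟨y, hy, hxy⟩ := Metric.mem_closure_iff.mp hx1 (δ / (2 * (M' + 1)))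
      (by positivity)
    set y' : dom := ⟨y, hy⟩ with hy'
    set K : ℝ := ‖A y'‖ with hK
    have hK0 : 0 ≤ K := norm_nonneg _
    refine ⟨max 1 (2 * (M' + 1) * K / δ + 1), fun N hN => ?_⟩
    have hN1 : (1:ℝ) ≤ N := le_trans (le_max_left _ _) hN
    have hN0 : 0 < N := lt_of_lt_of_le one_pos hN1
    have hNge : 2 * (M' + 1) * K / δ + 1 ≤ N := le_trans (le_max_right _ _) hN
    have hid : N • R N y + R N (A y') = y := by
      have h1 := hRleft N hN0 y'
      rw [map_add, _root_.map_smul] at h1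
      rw [← hcs]
      exact h1
    have e1 : N • R N x - x = N • R N (x - y) + (N • R N y - y) + (y - x) := by
      rw [map_sub, smul_sub]; abel
    rw [dist_eq_norm, e1]
    have b1 : ‖N • R N (x - y)‖ ≤ M' * ‖x - y‖ := hbr N hN0 _
    have b2 : ‖N • R N y - y‖ ≤ M' * K / N := by
      have h6 : N • R N y - y = -(R N (A y')) := by
        rw [eq_neg_iff_add_eq_zero, sub_add_eq_add_sub, sub_eq_zero]
        exact hid
      rw [h6, norm_neg, le_div_iff₀ hN0, mul_comm]
      exact hbm N hN0 _
    have b3 : M' * K / N ≤ δ / 2 := by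
      rw [div_le_iff₀ hN0]
      have h4 : 2 * (M' + 1) * K + δ ≤ δ * N := by
        have := mul_le_mul_of_nonneg_left hNge (le_of_lt hδ)
        calc 2 * (M' + 1) * K + δ = δ * (2 * (M' + 1) * K / δ + 1) := by
              field_simp
          _ ≤ δ * N := this
      nlinarith
    have hd : ‖x - y‖ < δ / (2 * (M' + 1)) := by
      rw [← dist_eq_norm]; exact hxy
    have b4 : (M' + 1) * ‖x - y‖ < δ / 2 := by
      have h5 : (M' + 1) * (δ / (2 * (M' + 1))) = δ / 2 := by
        field_simp
      calc (M' + 1) * ‖x - y‖ < (M' + 1) * (δ / (2 * (M' + 1))) := by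
            apply mul_lt_mul_of_pos_left hd (by positivity)
        _ = δ / 2 := h5
    calc ‖N • R N (x - y) + (N • R N y - y) + (y - x)‖
        ≤ ‖N • R N (x - y)‖ + ‖N • R N y - y‖ + ‖y - x‖ := norm_add₃_le
      _ ≤ M' * ‖x - y‖ + M' * K / N + ‖x - y‖ := by
          rw [norm_sub_rev y x]
          exact add_le_add (add_le_add b1 b2) le_rfl
      _ < δ := by nlinarith [norm_nonneg (x - y)]
  -- limit at zero
  have T2 : Tendsto (fun ε : ℝ => ε • R ε x) (𝓝[>] (0:ℝ)) (𝓝 0) := by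
    rw [Metric.tendsto_nhdsWithin_nhds]
    intro δ hδ
    obtain ⟨z, hz, hxz⟩ := Metric.mem_closure_iff.mp hx2 (δ / (2 * (M' + 1)))
      (by positivity)
    obtain ⟨y, rfl⟩ := hz
    set C : ℝ := (1 + M') * ‖(y : X)‖ + 1 with hC
    have hC0 : 0 < C := by positivity
    refine ⟨δ / (2 * C), by positivity, fun ε hε hdist => ?_⟩
    have hε0 : 0 < ε := hε
    have hεlt : ε < δ / (2 * C) := by
      rw [Real.dist_eq, sub_zero, abs_of_pos hε0] at hdist
      exact hdist
    have hid : R ε (A y) = (y : X) - ε • R ε (y : X) := by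
      have h1 := hRleft ε hε0 y
      rw [map_add, _root_.map_smul, hcs] at h1
      rw [eq_sub_iff_add_eq, add_comm]
      exact h1
    have e1 : ε • R ε x = ε • R ε (x - A y) + ε • R ε (A y) := by
      rw [map_sub, smul_sub]; abel
    rw [dist_eq_norm, sub_zero, e1]
    have b1 : ‖ε • R ε (x - A y)‖ ≤ M' * ‖x - A y‖ := hbr ε hε0 _
    have hd : ‖x - A y‖ < δ / (2 * (M' + 1)) := by
      rw [← dist_eq_norm]; exact hxz
    have b1' : ‖ε • R ε (x - A y)‖ < δ / 2 := by
      have h5 : (M' + 1) * (δ / (2 * (M' + 1))) = δ / 2 := by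
        field_simp
      calc ‖ε • R ε (x - A y)‖ ≤ M' * ‖x - A y‖ := b1
        _ ≤ (M' + 1) * ‖x - A y‖ := mul_le_mul_of_nonneg_right (by linarith) (norm_nonneg _)
        _ < (M' + 1) * (δ / (2 * (M' + 1))) :=
            mul_lt_mul_of_pos_left hd (by positivity)
        _ = δ / 2 := h5
    have b2 : ‖ε • R ε (A y)‖ < δ / 2 := by
      have e2 : ε • R ε (A y) = ε • (y : X) - ε • (ε • R ε (y : X)) := by
        rw [hid, smul_sub]
      rw [e2]
      have c1 : ‖ε • (y : X)‖ = ε * ‖(y : X)‖ := by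
        rw [norm_smul, Real.norm_eq_abs, abs_of_pos hε0]
      have c2 : ‖ε • (ε • R ε (y : X))‖ ≤ ε * (M' * ‖(y : X)‖) := by
        rw [norm_smul, Real.norm_eq_abs, abs_of_pos hε0]
        exact mul_le_mul_of_nonneg_left (hbr ε hε0 _) (le_of_lt hε0)
      have hCne : C ≠ 0 := ne_of_gt hC0
      have hεC : ε * C < δ / 2 := by
        calc ε * C < δ / (2 * C) * C := mul_lt_mul_of_pos_right hεlt hC0
          _ = δ / 2 := by
              field_simp
      calc ‖ε • (y : X) - ε • (ε • R ε (y : X))‖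
          ≤ ‖ε • (y : X)‖ + ‖ε • (ε • R ε (y : X))‖ := norm_sub_le _ _
        _ ≤ ε * ‖(y : X)‖ + ε * (M' * ‖(y : X)‖) := by
            rw [c1]; exact add_le_add le_rfl c2
        _ ≤ ε * C := by rw [hC]; nlinarith [norm_nonneg (y : X), hε0.le]
        _ < δ / 2 := hεC
    calc ‖ε • R ε (x - A y) + ε • R ε (A y)‖
        ≤ ‖ε • R ε (x - A y)‖ + ‖ε • R ε (A y)‖ := norm_add_le _ _
      _ < δ / 2 + δ / 2 := add_lt_add b1' b2
      _ = δ := by ring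
  -- assemble
  have Tfin : Tendsto (fun p : ℝ × ℝ => p.2 • R p.2 x - p.1 • R p.1 x)
      ((𝓝[>] (0:ℝ)) ×ˢ atTop) (𝓝 x) := by
    have := (T1.comp tendsto_snd).sub (T2.comp tendsto_fst)
    simpa using this
  apply Tfin.congr'
  filter_upwards [prod_mem_prod self_mem_nhdsWithin (Ioi_mem_atTop (0:ℝ))]
    with p hp
  exact (key p.1 p.2 hp.1 hp.2).symm
end

section
/- Let 0 < s, α < 1 and 1 ≤ q ≤ ∞. Define T : ℓ^q(ℤ) → ℓ^q(ℤ) by (T a)_j = Σ_{i∈ℤ} K(j,i) a_i with kernel K(j,i) = (2^{-j} 2^{iα})^{1-s} / (1 + 2(2^{-j} 2^{iα}) cos(πα) + (2^{-j} 2^{iα})²). Then T is a bounded linear operator on ℓ^q(ℤ); i.e. there is a constant C = C(s,α) such that ‖T a‖_{ℓ^q} ≤ C ‖a‖_{ℓ^q} for all a ∈ ℓ^q(ℤ). -/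
open ENNReal Real


open ENNReal Real

lemma aux_sum_bound {ρ d : ℝ} (hρ : 0 < ρ) (hd : 0 < d) :
    ∃ A : ℝ≥0∞, A ≠ ⊤ ∧ ∀ θ : ℝ,
      ∑' n : ℤ, ENNReal.ofReal ((2:ℝ) ^ (-(|(n:ℝ) * d - θ| * ρ))) ≤ A := by
  set r : ℝ≥0∞ := ENNReal.ofReal ((2:ℝ) ^ (-(d * ρ))) with hr
  have hrlt : r < 1 := by
    rw [hr, ENNReal.ofReal_lt_one]
    exact Real.rpow_lt_one_of_one_lt_of_neg (by norm_num) (by nlinarith)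
  have hfin : (1 - r)⁻¹ ≠ ⊤ := by
    rw [Ne, ENNReal.inv_eq_top, tsub_eq_zero_iff_le]
    exact fun h => absurd h (not_le.2 hrlt)
  refine ⟨ENNReal.ofReal ((2:ℝ) ^ (d * ρ)) * ((1 - r)⁻¹ + (1 - r)⁻¹),
    ENNReal.mul_ne_top ENNReal.ofReal_ne_top (by finiteness), fun θ => ?_⟩
  set m : ℤ := round (θ / d) with hm
  -- termwise bound
  have hterm : ∀ n : ℤ, ENNReal.ofReal ((2:ℝ) ^ (-(|(n:ℝ) * d - θ| * ρ)))
      ≤ ENNReal.ofReal ((2:ℝ) ^ (d * ρ)) * r ^ (n - m).natAbs := by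
    intro n
    have h1 : ((n - m).natAbs : ℝ) = |(n:ℝ) - (m:ℝ)| := by
      rw [Nat.cast_natAbs]
      push_cast
      ring_nf
    have hround : |(m:ℝ) - θ / d| ≤ 1 / 2 := by
      rw [hm, abs_sub_comm]
      exact abs_sub_round (θ / d)
    have habs : d * (|(n:ℝ) - (m:ℝ)| - 1) ≤ |(n:ℝ) * d - θ| := by
      have h3 : |(n:ℝ) * d - θ| = d * |(n:ℝ) - θ / d| := by
        have he : (n:ℝ) * d - θ = d * ((n:ℝ) - θ / d) := by field_simp
        rw [he, abs_mul, abs_of_pos hd]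
      have h4 : |(n:ℝ) - (m:ℝ)| ≤ |(n:ℝ) - θ / d| + |(m:ℝ) - θ / d| := by
        have := abs_sub_abs_le_abs_sub ((n:ℝ) - θ/d) ((m:ℝ) - θ/d)
        calc |(n:ℝ) - (m:ℝ)| = |((n:ℝ) - θ/d) - ((m:ℝ) - θ/d)| := by ring_nf
          _ ≤ |(n:ℝ) - θ/d| + |(m:ℝ) - θ/d| := abs_sub _ _
      rw [h3]
      nlinarith [abs_nonneg ((n:ℝ) - θ/d)]
    have h5 : (2:ℝ) ^ (-(|(n:ℝ) * d - θ| * ρ))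
        ≤ (2:ℝ) ^ (d * ρ) * ((2:ℝ) ^ (-(d * ρ))) ^ (n - m).natAbs := by
      have : (2:ℝ) ^ (d * ρ) * ((2:ℝ) ^ (-(d * ρ))) ^ (n - m).natAbs
          = (2:ℝ) ^ (d * ρ + ((n - m).natAbs : ℝ) * (-(d * ρ))) := by
        rw [Real.rpow_add (by norm_num : (0:ℝ) < 2), ← Real.rpow_natCast ((2:ℝ) ^ (-(d*ρ))) _,
          ← Real.rpow_mul (by norm_num : (0:ℝ) ≤ 2)]
        ring_nf
      rw [this]
      apply Real.rpow_le_rpow_of_exponent_le (by norm_num)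
      rw [h1]
      nlinarith [habs]
    calc ENNReal.ofReal ((2:ℝ) ^ (-(|(n:ℝ) * d - θ| * ρ)))
        ≤ ENNReal.ofReal ((2:ℝ) ^ (d * ρ) * ((2:ℝ) ^ (-(d * ρ))) ^ (n - m).natAbs) :=
          ENNReal.ofReal_le_ofReal h5
      _ = ENNReal.ofReal ((2:ℝ) ^ (d * ρ)) * r ^ (n - m).natAbs := by
          rw [ENNReal.ofReal_mul (by positivity), ENNReal.ofReal_pow (by positivity)]
  calc ∑' n : ℤ, ENNReal.ofReal ((2:ℝ) ^ (-(|(n:ℝ) * d - θ| * ρ)))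
      ≤ ∑' n : ℤ, ENNReal.ofReal ((2:ℝ) ^ (d * ρ)) * r ^ (n - m).natAbs :=
        ENNReal.tsum_le_tsum hterm
    _ = ENNReal.ofReal ((2:ℝ) ^ (d * ρ)) * ∑' n : ℤ, r ^ (n - m).natAbs := by
        rw [ENNReal.tsum_mul_left]
    _ ≤ ENNReal.ofReal ((2:ℝ) ^ (d * ρ)) * ((1 - r)⁻¹ + (1 - r)⁻¹) := by
        gcongr
        have hre : ∑' n : ℤ, r ^ (n - m).natAbs = ∑' k : ℤ, r ^ k.natAbs := by
          rw [← (Equiv.addRight m).tsum_eq (fun n : ℤ => r ^ (n - m).natAbs)]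
          simp
        rw [hre, tsum_of_nat_of_neg_add_one ENNReal.summable ENNReal.summable]
        gcongr
        · simp only [Int.natAbs_natCast]
          exact le_of_eq (ENNReal.tsum_geometric r)
        · rw [← ENNReal.tsum_geometric r]
          apply ENNReal.tsum_le_tsum
          intro n
          have hn : (-((n:ℤ) + 1)).natAbs = n + 1 := by omega
          rw [hn]
          exact pow_le_pow_right_of_le_one' hrlt.le (by omega)

open ENNReal Real

lemma aux_sin_pos {α : ℝ} (hα0 : 0 < α) (hα1 : α < 1) : 0 < Real.sin (Real.pi * α) :=
  Real.sin_pos_of_pos_of_lt_pi (by positivity)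
    (by nlinarith [Real.pi_pos])

lemma aux_kernel_bound {s α t : ℝ} (hs0 : 0 < s) (hs1 : s < 1) (hα0 : 0 < α) (hα1 : α < 1) :
    ((2:ℝ) ^ t) ^ (1 - s) /
      (1 + 2 * (2:ℝ) ^ t * Real.cos (Real.pi * α) + ((2:ℝ) ^ t) ^ 2)
      ≤ (4 / Real.sin (Real.pi * α) ^ 2) * (2:ℝ) ^ (-(|t| * (1 - s))) := by
  set μ : ℝ := (2:ℝ) ^ t with hμ
  have hμpos : 0 < μ := Real.rpow_pos_of_pos (by norm_num) t
  set c : ℝ := Real.cos (Real.pi * α) with hc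
  set σ : ℝ := Real.sin (Real.pi * α) with hσ
  have hσpos : 0 < σ := aux_sin_pos hα0 hα1
  have hσ2pos : 0 < σ ^ 2 := by positivity
  have hpyth : σ ^ 2 + c ^ 2 = 1 := Real.sin_sq_add_cos_sq _
  have hσ2le : σ ^ 2 ≤ 1 := by nlinarith [sq_nonneg c]
  have hc1 : -1 ≤ c := Real.neg_one_le_cos _
  set D : ℝ := 1 + 2 * μ * c + μ ^ 2 with hD
  have hD1 : σ ^ 2 ≤ D := by nlinarith [sq_nonneg (μ + c)]
  have hD2 : (μ - 1) ^ 2 ≤ D := by nlinarith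
  have hDpos : 0 < D := lt_of_lt_of_le hσ2pos hD1
  rcases le_total t 0 with ht | ht
  · have h2 : (2:ℝ) ^ (-(|t| * (1 - s))) = μ ^ (1 - s) := by
      rw [abs_of_nonpos ht, hμ, ← Real.rpow_mul (by norm_num : (0:ℝ) ≤ 2)]
      congr 1; ring
    rw [h2, div_le_iff₀ hDpos]
    have hw : (0:ℝ) ≤ μ ^ (1 - s) := (Real.rpow_pos_of_pos hμpos _).le
    nlinarith [mul_nonneg (mul_nonneg (by positivity : (0:ℝ) ≤ 4 / σ ^ 2) hw)
      (sub_nonneg.2 hD1), div_mul_cancel₀ (4:ℝ) hσ2pos.ne']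
  · have hμ1 : 1 ≤ μ := by
      calc (1:ℝ) = (2:ℝ) ^ (0:ℝ) := (Real.rpow_zero 2).symm
      _ ≤ (2:ℝ) ^ t := Real.rpow_le_rpow_of_exponent_le (by norm_num) ht
    have h2 : (2:ℝ) ^ (-(|t| * (1 - s))) = μ ^ (s - 1) := by
      rw [abs_of_nonneg ht, hμ, ← Real.rpow_mul (by norm_num : (0:ℝ) ≤ 2)]
      congr 1; ring
    rw [h2, div_le_iff₀ hDpos]
    have hkey : σ ^ 2 * μ ^ 2 ≤ 4 * D := by
      nlinarith [mul_nonneg hσ2pos.le (sq_nonneg (μ - 2)),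
        mul_nonneg (sub_nonneg.2 hσ2le) (sq_nonneg (μ - 1))]
    have hw : (0:ℝ) < μ ^ (s - 1) := Real.rpow_pos_of_pos hμpos _
    have hsplit : μ ^ (1 - s) = μ ^ (s - 1) * μ ^ (2 - 2 * s) := by
      rw [← Real.rpow_add hμpos]; congr 1; ring
    have hpow : μ ^ (2 - 2 * s) ≤ μ ^ 2 := by
      have h := Real.rpow_le_rpow_of_exponent_le hμ1 (by linarith : 2 - 2 * s ≤ (2:ℝ))
      rwa [show ((2:ℝ)) = ((2:ℕ):ℝ) by norm_num, Real.rpow_natCast] at h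
    have h4 : μ ^ 2 ≤ 4 / σ ^ 2 * D := by
      rw [div_mul_eq_mul_div, le_div_iff₀ hσ2pos]; nlinarith
    calc μ ^ (1 - s) = μ ^ (s - 1) * μ ^ (2 - 2 * s) := hsplit
      _ ≤ μ ^ (s - 1) * μ ^ 2 := by gcongr
      _ ≤ μ ^ (s - 1) * (4 / σ ^ 2 * D) := by gcongr
      _ = 4 / σ ^ 2 * μ ^ (s - 1) * D := by ring

theorem stmt_16 (s α : ℝ) (hs0 : 0 < s) (hs1 : s < 1) (hα0 : 0 < α) (hα1 : α < 1)
    (q : ℝ≥0∞) [Fact (1 ≤ q)]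
    (K : ℤ → ℤ → ℝ)
    (hK : ∀ j i : ℤ, K j i =
      ((2 : ℝ) ^ (-j) * (2 : ℝ) ^ ((i : ℝ) * α)) ^ (1 - s) /
        (1 + 2 * ((2 : ℝ) ^ (-j) * (2 : ℝ) ^ ((i : ℝ) * α)) * Real.cos (Real.pi * α) +
          ((2 : ℝ) ^ (-j) * (2 : ℝ) ^ ((i : ℝ) * α)) ^ 2)) :
    ∃ C : ℝ, 0 < C ∧ ∀ a : lp (fun _ : ℤ => ℂ) q,
      (∀ j : ℤ, Summable (fun i : ℤ => (K j i : ℂ) * a i)) ∧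
      ∃ h : (fun j : ℤ => ∑' i : ℤ, (K j i : ℂ) * a i) ∈ lp (fun _ : ℤ => ℂ) q,
        ‖(⟨fun j : ℤ => ∑' i : ℤ, (K j i : ℂ) * a i, h⟩ : lp (fun _ : ℤ => ℂ) q)‖ ≤
          C * ‖a‖ := by
  have hq1 : (1 : ℝ≥0∞) ≤ q := Fact.out
  have hq0 : q ≠ 0 := (lt_of_lt_of_le zero_lt_one hq1).ne'
  set ρ : ℝ := 1 - s with hρdef
  have hρ : 0 < ρ := by linarith
  -- rewrite the kernel in rpow form
  have hKform : ∀ j i : ℤ, K j i = ((2:ℝ) ^ ((i:ℝ) * α - (j:ℝ))) ^ (1 - s) /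
      (1 + 2 * (2:ℝ) ^ ((i:ℝ) * α - (j:ℝ)) * Real.cos (Real.pi * α)
        + ((2:ℝ) ^ ((i:ℝ) * α - (j:ℝ))) ^ 2) := by
    intro j i
    rw [hK]
    have h2 : (2:ℝ) ^ (-j) * (2:ℝ) ^ ((i:ℝ) * α) = (2:ℝ) ^ ((i:ℝ) * α - (j:ℝ)) := by
      rw [← Real.rpow_intCast 2 (-j), ← Real.rpow_add (by norm_num : (0:ℝ) < 2)]
      congr 1
      push_cast
      ring
    rw [h2]
  have hσpos : 0 < Real.sin (Real.pi * α) := aux_sin_pos hα0 hα1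
  have hKpos : ∀ j i : ℤ, 0 < K j i := by
    intro j i
    rw [hKform]
    set μ : ℝ := (2:ℝ) ^ ((i:ℝ) * α - (j:ℝ)) with hμ
    have hμpos : 0 < μ := Real.rpow_pos_of_pos (by norm_num) _
    have hD : 0 < 1 + 2 * μ * Real.cos (Real.pi * α) + μ ^ 2 := by
      nlinarith [sq_nonneg (μ + Real.cos (Real.pi * α)),
        Real.sin_sq_add_cos_sq (Real.pi * α), hσpos]
    positivity
  set B : ℝ := 4 / Real.sin (Real.pi * α) ^ 2 with hBdef
  have hBpos : 0 < B := by positivity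
  have hKle : ∀ j i : ℤ, K j i ≤ B * (2:ℝ) ^ (-(|(i:ℝ) * α - (j:ℝ)| * ρ)) := by
    intro j i
    rw [hKform]
    exact aux_kernel_bound hs0 hs1 hα0 hα1
  -- the uniform row/column sum bound
  obtain ⟨A₁, hA₁top, hA₁⟩ := aux_sum_bound hρ hα0
  obtain ⟨A₂, hA₂top, hA₂⟩ := aux_sum_bound hρ one_pos
  set Kn : ℤ → ℤ → ℝ≥0∞ := fun j i => ENNReal.ofReal (K j i) with hKn
  set A : ℝ≥0∞ := ENNReal.ofReal B * A₁ ⊔ ENNReal.ofReal B * A₂ with hAdef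
  have hAtop : A ≠ ⊤ := by
    have h1 : ENNReal.ofReal B * A₁ ≠ ⊤ := ENNReal.mul_ne_top ENNReal.ofReal_ne_top hA₁top
    have h2 : ENNReal.ofReal B * A₂ ≠ ⊤ := ENNReal.mul_ne_top ENNReal.ofReal_ne_top hA₂top
    exact (max_lt h1.lt_top h2.lt_top).ne
  have hrow : ∀ j : ℤ, ∑' i : ℤ, Kn j i ≤ A := by
    intro j
    calc ∑' i : ℤ, Kn j i
        ≤ ∑' i : ℤ, ENNReal.ofReal (B * (2:ℝ) ^ (-(|(i:ℝ) * α - (j:ℝ)| * ρ))) :=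
          ENNReal.tsum_le_tsum fun i => ENNReal.ofReal_le_ofReal (hKle j i)
      _ = ENNReal.ofReal B * ∑' i : ℤ, ENNReal.ofReal ((2:ℝ) ^ (-(|(i:ℝ) * α - (j:ℝ)| * ρ))) := by
          simp_rw [ENNReal.ofReal_mul hBpos.le]
          rw [ENNReal.tsum_mul_left]
      _ ≤ ENNReal.ofReal B * A₁ := by gcongr; exact hA₁ (j:ℝ)
      _ ≤ A := le_sup_left
  have hcol : ∀ i : ℤ, ∑' j : ℤ, Kn j i ≤ A := by
    intro i
    calc ∑' j : ℤ, Kn j i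
        ≤ ∑' j : ℤ, ENNReal.ofReal (B * (2:ℝ) ^ (-(|(j:ℝ) * 1 - (i:ℝ) * α| * ρ))) := by
          apply ENNReal.tsum_le_tsum
          intro j
          apply ENNReal.ofReal_le_ofReal
          have : |(j:ℝ) * 1 - (i:ℝ) * α| = |(i:ℝ) * α - (j:ℝ)| := by
            rw [mul_one, abs_sub_comm]
          rw [this]
          exact hKle j i
      _ = ENNReal.ofReal B * ∑' j : ℤ, ENNReal.ofReal ((2:ℝ) ^ (-(|(j:ℝ) * 1 - (i:ℝ) * α| * ρ))) := by
          simp_rw [ENNReal.ofReal_mul hBpos.le]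
          rw [ENNReal.tsum_mul_left]
      _ ≤ ENNReal.ofReal B * A₂ := by gcongr; exact hA₂ ((i:ℝ) * α)
      _ ≤ A := le_sup_right
  have hA0 : A ≠ 0 :=
    (lt_of_lt_of_le (ENNReal.ofReal_pos.2 (hKpos 0 0)) ((ENNReal.le_tsum 0).trans (hrow 0))).ne'
  -- real-valued consequences
  have hKsum : ∀ j : ℤ, Summable fun i : ℤ => K j i := by
    intro j
    have h := ENNReal.summable_toReal (lt_of_le_of_lt (hrow j) (lt_top_iff_ne_top.2 hAtop)).ne
    refine (summable_congr fun i => ?_).1 h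
    exact ENNReal.toReal_ofReal (hKpos j i).le
  have hKofReal : ∀ j : ℤ, ENNReal.ofReal (∑' i : ℤ, K j i) = ∑' i : ℤ, Kn j i := fun j =>
    ENNReal.ofReal_tsum_of_nonneg (fun i => (hKpos j i).le) (hKsum j)
  have hKtsum_le : ∀ j : ℤ, ∑' i : ℤ, K j i ≤ A.toReal := by
    intro j
    have h1 : (ENNReal.ofReal (∑' i : ℤ, K j i)).toReal ≤ A.toReal :=
      ENNReal.toReal_mono hAtop ((hKofReal j).le.trans (hrow j))
    rwa [ENNReal.toReal_ofReal (tsum_nonneg fun i => (hKpos j i).le)] at h1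
  set C : ℝ := max A.toReal 1 with hCdef
  have hC : 0 < C := lt_of_lt_of_le zero_lt_one (le_max_right _ _)
  have hAC : A.toReal ≤ C := le_max_left _ _
  refine ⟨C, hC, fun a => ?_⟩
  set M : ℝ := ‖a‖ with hM
  have hM0 : 0 ≤ M := norm_nonneg _
  have hai : ∀ i : ℤ, ‖a i‖ ≤ M := fun i => lp.norm_apply_le_norm hq0 a i
  have hnorm_term : ∀ j i : ℤ, ‖(K j i : ℂ) * a i‖ = K j i * ‖a i‖ := by
    intro j i
    rw [norm_mul, Complex.norm_real, Real.norm_eq_abs, abs_of_pos (hKpos j i)]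
  have hsumKa : ∀ j : ℤ, Summable fun i : ℤ => K j i * ‖a i‖ := by
    intro j
    refine Summable.of_nonneg_of_le (fun i => mul_nonneg (hKpos j i).le (norm_nonneg _))
      (fun i => ?_) ((hKsum j).mul_right M)
    exact mul_le_mul_of_nonneg_left (hai i) (hKpos j i).le
  have hTS : ∀ j : ℤ, Summable fun i : ℤ => (K j i : ℂ) * a i := by
    intro j
    apply Summable.of_norm
    refine (summable_congr fun i => (hnorm_term j i)).2 (hsumKa j)
  set T : ℤ → ℂ := fun j => ∑' i : ℤ, (K j i : ℂ) * a i with hT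
  have hTb : ∀ j : ℤ, ‖T j‖ ≤ ∑' i : ℤ, K j i * ‖a i‖ := by
    intro j
    calc ‖T j‖ ≤ ∑' i : ℤ, ‖(K j i : ℂ) * a i‖ :=
          norm_tsum_le_tsum_norm ((summable_congr fun i => (hnorm_term j i)).2 (hsumKa j))
      _ = ∑' i : ℤ, K j i * ‖a i‖ := tsum_congr fun i => hnorm_term j i
  have hTbA : ∀ j : ℤ, ‖T j‖ ≤ A.toReal * M := by
    intro j
    refine (hTb j).trans ?_
    calc ∑' i : ℤ, K j i * ‖a i‖
        ≤ ∑' i : ℤ, K j i * M := Summable.tsum_le_tsum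
          (fun i => mul_le_mul_of_nonneg_left (hai i) (hKpos j i).le)
          (hsumKa j) ((hKsum j).mul_right M)
      _ = (∑' i : ℤ, K j i) * M := tsum_mul_right
      _ ≤ A.toReal * M := mul_le_mul_of_nonneg_right (hKtsum_le j) hM0
  refine ⟨hTS, ?_⟩
  by_cases hqtop : q = ⊤
  · subst hqtop
    have memb : Memℓp T ⊤ := memℓp_infty ⟨A.toReal * M, by rintro x ⟨j, rfl⟩; exact hTbA j⟩
    refine ⟨memb, ?_⟩
    apply lp.norm_le_of_forall_le (mul_nonneg hC.le hM0)
    intro j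
    exact (hTbA j).trans (mul_le_mul_of_nonneg_right hAC hM0)
  · -- finite exponent case
    set p : ℝ := q.toReal with hpq
    have hp0 : 0 < p := ENNReal.toReal_pos hq0 hqtop
    have hp1 : 1 ≤ p := by
      have := ENNReal.toReal_mono hqtop hq1
      simpa using this
    set F : ℤ → ℝ≥0∞ := fun i => ENNReal.ofReal ‖a i‖ with hF
    set g : ℤ → ℝ≥0∞ := fun j => ∑' i : ℤ, Kn j i * F i with hg
    have henorm : ∀ j : ℤ, ENNReal.ofReal ‖T j‖ ≤ g j := by
      intro j
      calc ENNReal.ofReal ‖T j‖ ≤ ENNReal.ofReal (∑' i : ℤ, K j i * ‖a i‖) :=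
            ENNReal.ofReal_le_ofReal (hTb j)
        _ = ∑' i : ℤ, ENNReal.ofReal (K j i * ‖a i‖) :=
            ENNReal.ofReal_tsum_of_nonneg (fun i => mul_nonneg (hKpos j i).le (norm_nonneg _))
              (hsumKa j)
        _ = g j := tsum_congr fun i => ENNReal.ofReal_mul (hKpos j i).le
    have hKn0 : ∀ j i : ℤ, Kn j i ≠ 0 := fun j i => (ENNReal.ofReal_pos.2 (hKpos j i)).ne'
    have hKntop : ∀ j i : ℤ, Kn j i ≠ ⊤ := fun j i => ENNReal.ofReal_ne_top
    -- Hölder step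
    have hHolder : ∀ j : ℤ, g j ^ p ≤ A ^ (p - 1) * ∑' i : ℤ, Kn j i * F i ^ p := by
      intro j
      rcases eq_or_lt_of_le hp1 with hp1' | hp1'
      · simp only [← hp1', ENNReal.rpow_one, sub_self, ENNReal.rpow_zero, one_mul]
        exact le_refl _
      · set p' : ℝ := Real.conjExponent p with hp'
        have hpq' : p.HolderConjugate p' := Real.HolderConjugate.conjExponent hp1'
        have hmeas1 : AEMeasurable (fun i : ℤ => Kn j i ^ (1/p) * F i)
            (MeasureTheory.Measure.count) := (measurable_of_countable _).aemeasurable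
        have hmeas2 : AEMeasurable (fun i : ℤ => Kn j i ^ (1/p'))
            (MeasureTheory.Measure.count) := (measurable_of_countable _).aemeasurable
        have hH := ENNReal.lintegral_mul_le_Lp_mul_Lq
          (MeasureTheory.Measure.count : MeasureTheory.Measure ℤ) hpq' hmeas1 hmeas2
        simp only [MeasureTheory.lintegral_count] at hH
        have hconj : 1/p + 1/p' = 1 := by
          have h := hpq'.inv_add_inv_eq_one
          simpa [one_div] using h
        have hlhs : ∑' i : ℤ, ((fun i => Kn j i ^ (1/p) * F i) * fun i => Kn j i ^ (1/p')) i
            = g j := by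
          apply tsum_congr
          intro i
          simp only [Pi.mul_apply]
          rw [mul_comm (Kn j i ^ (1/p)) (F i), mul_assoc,
            ← ENNReal.rpow_add _ _ (hKn0 j i) (hKntop j i), hconj, ENNReal.rpow_one, mul_comm]
        rw [hlhs] at hH
        have hrhs1 : ∑' i : ℤ, ((fun i : ℤ => Kn j i ^ (1/p) * F i) i) ^ p
            = ∑' i : ℤ, Kn j i * F i ^ p := by
          apply tsum_congr
          intro i
          rw [ENNReal.mul_rpow_of_nonneg _ _ hp0.le, ← ENNReal.rpow_mul,
            one_div_mul_cancel hp0.ne', ENNReal.rpow_one]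
        have hrhs2 : ∑' i : ℤ, ((fun i : ℤ => Kn j i ^ (1/p')) i) ^ p' = ∑' i : ℤ, Kn j i := by
          apply tsum_congr
          intro i
          rw [← ENNReal.rpow_mul, one_div_mul_cancel hpq'.symm.pos.ne', ENNReal.rpow_one]
        rw [hrhs1, hrhs2] at hH
        have hstep : g j ≤ (∑' i : ℤ, Kn j i * F i ^ p) ^ (1/p) * A ^ (1/p') := by
          refine hH.trans ?_
          exact mul_le_mul_right (ENNReal.rpow_le_rpow (hrow j)
            (one_div_nonneg.2 hpq'.symm.nonneg)) _
        calc g j ^ p ≤ ((∑' i : ℤ, Kn j i * F i ^ p) ^ (1/p) * A ^ (1/p')) ^ p :=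
              ENNReal.rpow_le_rpow hstep hp0.le
          _ = (∑' i : ℤ, Kn j i * F i ^ p) * A ^ (p - 1) := by
              rw [ENNReal.mul_rpow_of_nonneg _ _ hp0.le, ← ENNReal.rpow_mul, ← ENNReal.rpow_mul,
                one_div_mul_cancel hp0.ne', ENNReal.rpow_one]
              congr 1
              rw [show 1/p' * p = p / p' by ring, hpq'.div_conj_eq_sub_one]
          _ = A ^ (p - 1) * ∑' i : ℤ, Kn j i * F i ^ p := mul_comm _ _
    have hsum_g : ∑' j : ℤ, g j ^ p ≤ A ^ p * ∑' i : ℤ, F i ^ p := by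
      have hApow : A ^ (p - 1) * A = A ^ p := by
        have h := ENNReal.rpow_add (p - 1) 1 hA0 hAtop
        rw [ENNReal.rpow_one] at h
        rw [← h, sub_add_cancel]
      calc ∑' j : ℤ, g j ^ p
          ≤ ∑' j : ℤ, A ^ (p-1) * ∑' i : ℤ, Kn j i * F i ^ p := ENNReal.tsum_le_tsum hHolder
        _ = A ^ (p-1) * ∑' j : ℤ, ∑' i : ℤ, Kn j i * F i ^ p := ENNReal.tsum_mul_left
        _ = A ^ (p-1) * ∑' i : ℤ, ∑' j : ℤ, Kn j i * F i ^ p := by rw [ENNReal.tsum_comm]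
        _ = A ^ (p-1) * ∑' i : ℤ, (∑' j : ℤ, Kn j i) * F i ^ p := by
            congr 1
            exact tsum_congr fun i => ENNReal.tsum_mul_right
        _ ≤ A ^ (p-1) * ∑' i : ℤ, A * F i ^ p := by
            gcongr with i
            exact hcol i
        _ = A ^ (p-1) * (A * ∑' i : ℤ, F i ^ p) := by rw [ENNReal.tsum_mul_left]
        _ = A ^ p * ∑' i : ℤ, F i ^ p := by rw [← mul_assoc, hApow]
    have haSum : Summable fun i : ℤ => ‖a i‖ ^ p := (lp.memℓp a).summable hp0
    have hFp : ∑' i : ℤ, F i ^ p = ENNReal.ofReal (M ^ p) := by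
      rw [hM, lp.norm_rpow_eq_tsum hp0 a, ENNReal.ofReal_tsum_of_nonneg
        (fun i => Real.rpow_nonneg (norm_nonneg _) p) haSum]
      exact tsum_congr fun i => ENNReal.ofReal_rpow_of_nonneg (norm_nonneg _) hp0.le
    set R : ℝ≥0∞ := A ^ p * ENNReal.ofReal (M ^ p) with hR
    have hRtop : R ≠ ⊤ := ENNReal.mul_ne_top (ENNReal.rpow_ne_top_of_nonneg hp0.le hAtop)
      ENNReal.ofReal_ne_top
    have hTsum : ∑' j : ℤ, ENNReal.ofReal (‖T j‖ ^ p) ≤ R := by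
      calc ∑' j : ℤ, ENNReal.ofReal (‖T j‖ ^ p)
          = ∑' j : ℤ, (ENNReal.ofReal ‖T j‖) ^ p :=
            tsum_congr fun j => (ENNReal.ofReal_rpow_of_nonneg (norm_nonneg _) hp0.le).symm
        _ ≤ ∑' j : ℤ, g j ^ p := ENNReal.tsum_le_tsum fun j =>
            ENNReal.rpow_le_rpow (henorm j) hp0.le
        _ ≤ A ^ p * ∑' i : ℤ, F i ^ p := hsum_g
        _ = R := by rw [hFp]
    have hTsummable : Summable fun j : ℤ => ‖T j‖ ^ p := by
      have h := ENNReal.summable_toReal (lt_of_le_of_lt hTsum hRtop.lt_top).ne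
      refine (summable_congr fun j => ?_).1 h
      exact ENNReal.toReal_ofReal (Real.rpow_nonneg (norm_nonneg _) p)
    have memb : Memℓp T q := memℓp_gen hTsummable
    refine ⟨memb, ?_⟩
    apply lp.norm_le_of_tsum_le hp0 (mul_nonneg hC.le hM0)
    have h1 : ENNReal.ofReal (∑' j : ℤ, ‖T j‖ ^ p) ≤ R := by
      rw [ENNReal.ofReal_tsum_of_nonneg (fun j => Real.rpow_nonneg (norm_nonneg _) p)
        hTsummable]
      exact hTsum
    have h2 : ∑' j : ℤ, ‖T j‖ ^ p ≤ R.toReal := by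
      have h3 := ENNReal.toReal_mono hRtop h1
      rwa [ENNReal.toReal_ofReal (tsum_nonneg fun j => Real.rpow_nonneg (norm_nonneg _) p)]
        at h3
    refine h2.trans ?_
    have hRval : R.toReal = A.toReal ^ p * M ^ p := by
      rw [hR, ENNReal.toReal_mul, ENNReal.toReal_ofReal (Real.rpow_nonneg hM0 p),
        ← ENNReal.toReal_rpow]
    rw [hRval, Real.mul_rpow hC.le hM0]
    gcongr
end
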